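/- With the same setup, for each x̄ ∈ X̄ there exists a Cauchy sequence {xₙ} in the equivalence class x̄ such that lim F(xₙ) = F̄(x̄). -/

import Mathlib

open Filter Topology UniformSpace
open scoped ENNReal

/-- The extension of `F` to the metric completion: the infimum, over Cauchy sequences in `X`
representing the point `xbar` of the completion, of the liminf of `F` along the sequence. -/
noncomputable def FrechetExtension {X : Type*} [MetricSpace X] (F : X → ℝ≥0∞)
    (xbar : Completion X) : ℝ≥0∞ :=
  ⨅ u : {u : ℕ → X // CauchySeq u ∧
      Tendsto (fun n => (u n : Completion X)) atTop (𝓝 xbar)},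
    Filter.liminf (fun n => F (u.1 n)) atTop

theorem frechetExtension_attained {X : Type*} [MetricSpace X] (F : X → ℝ≥0∞)
    (hF : LowerSemicontinuous F)
    (hA : ∀ x : X, ∃ u : ℕ → X, (∀ n, u n ≠ x) ∧ Tendsto u atTop (𝓝 x) ∧
      Tendsto (fun n => F (u n)) atTop (𝓝 (F x))) :
    ∀ xbar : Completion X, ∃ u : ℕ → X, CauchySeq u ∧
      Tendsto (fun n => (u n : Completion X)) atTop (𝓝 xbar) ∧
      Tendsto (fun n => F (u n)) atTop (𝓝 (FrechetExtension F xbar)) := by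
  intro xbar
  -- convergence to xbar implies Cauchy in X
  have key : ∀ u : ℕ → X,
      Tendsto (fun n => (u n : Completion X)) atTop (𝓝 xbar) → CauchySeq u := by
    intro u hu
    have h1 : CauchySeq (fun n => (u n : Completion X)) := hu.cauchySeq
    rw [CauchySeq] at h1 ⊢
    rwa [show (Filter.map (fun n => (u n : Completion X)) atTop)
        = Filter.map ((↑) : X → Completion X) (Filter.map u atTop) by
          rw [Filter.map_map]; rfl,
      (Completion.isUniformInducing_coe X).cauchy_map_iff] at h1
  -- there exists at least one representing sequence
  obtain ⟨v, hv_mem, hv_t⟩ :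
      ∃ v : ℕ → Completion X, (∀ n, v n ∈ Set.range ((↑) : X → Completion X)) ∧
        Tendsto v atTop (𝓝 xbar) := by
    have hx : xbar ∈ closure (Set.range ((↑) : X → Completion X)) := by
      rw [Completion.denseRange_coe.closure_eq]; trivial
    exact mem_closure_iff_seq_limit.1 hx
  choose w hw using hv_mem
  have hw_t : Tendsto (fun n => (w n : Completion X)) atTop (𝓝 xbar) := by
    simpa only [hw] using hv_t
  haveI : Nonempty {u : ℕ → X // CauchySeq u ∧
      Tendsto (fun n => (u n : Completion X)) atTop (𝓝 xbar)} :=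
    ⟨⟨w, key w hw_t, hw_t⟩⟩
  set L := FrechetExtension F xbar with hL
  have hLle : ∀ u : ℕ → X, ∀ _ : CauchySeq u,
      ∀ h2 : Tendsto (fun n => (u n : Completion X)) atTop (𝓝 xbar),
      L ≤ liminf (fun n => F (u n)) atTop := by
    intro u h1 h2
    exact iInf_le (fun (u : {u : ℕ → X // CauchySeq u ∧
      Tendsto (fun n => (u n : Completion X)) atTop (𝓝 xbar)}) =>
        liminf (fun n => F (u.1 n)) atTop) ⟨u, h1, h2⟩
  rcases eq_top_or_lt_top L with hT | hT
  · -- L = ⊤ : any representing sequence works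
    refine ⟨w, key w hw_t, hw_t, ?_⟩
    apply tendsto_of_le_liminf_of_limsup_le
    · exact hLle w (key w hw_t) hw_t
    · rw [hT]; exact le_top
    · isBoundedDefault
    · isBoundedDefault
  · -- L < ⊤ : diagonal argument
    have hsel : ∀ m : ℕ, ∃ y : X,
        F y < L + ((m : ℝ≥0∞) + 1)⁻¹ ∧
        dist ((y : Completion X)) xbar < 1 / ((m : ℝ) + 1) := by
      intro m
      have hpos : (0 : ℝ≥0∞) < ((m : ℝ≥0∞) + 1)⁻¹ :=
        ENNReal.inv_pos.2 (by simp)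
      have hlt : L < L + ((m : ℝ≥0∞) + 1)⁻¹ :=
        ENNReal.lt_add_right hT.ne hpos.ne'
      obtain ⟨⟨u, hu1, hu2⟩, hu3⟩ := iInf_lt_iff.1 (hL ▸ hlt)
      have hfreq : ∃ᶠ n in atTop, F (u n) < L + ((m : ℝ≥0∞) + 1)⁻¹ :=
        frequently_lt_of_liminf_lt (by isBoundedDefault) hu3
      have hev : ∀ᶠ n in atTop,
          dist ((u n : Completion X)) xbar < 1 / ((m : ℝ) + 1) := by
        have := Metric.tendsto_atTop.1 hu2 (1 / ((m : ℝ) + 1))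
          (by positivity)
        obtain ⟨N, hN⟩ := this
        exact eventually_atTop.2 ⟨N, hN⟩
      obtain ⟨n, hn1, hn2⟩ := (hfreq.and_eventually hev).exists
      exact ⟨u n, hn1, hn2⟩
    choose x hx1 hx2 using hsel
    have hx_t : Tendsto (fun m => (x m : Completion X)) atTop (𝓝 xbar) := by
      rw [tendsto_iff_dist_tendsto_zero]
      apply squeeze_zero (fun m => dist_nonneg) (fun m => (hx2 m).le)
      exact tendsto_one_div_add_atTop_nhds_zero_nat
    have hxC : CauchySeq x := key x hx_t
    refine ⟨x, hxC, hx_t, ?_⟩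
    apply tendsto_of_le_liminf_of_limsup_le (h := by isBoundedDefault) (h' := by isBoundedDefault)
    · exact hLle x hxC hx_t
    · -- limsup ≤ L
      apply ENNReal.le_of_forall_pos_le_add
      intro ε hε _
      obtain ⟨N, hN⟩ := ENNReal.exists_nat_gt
        (show ((ε : ℝ≥0∞)⁻¹ ≠ ⊤) from ENNReal.inv_ne_top.2 (ENNReal.coe_ne_zero.2 hε.ne'))
      apply limsup_le_of_le (by isBoundedDefault)
      filter_upwards [eventually_ge_atTop N] with m hm
      have h1 : ((m : ℝ≥0∞) + 1)⁻¹ ≤ (ε : ℝ≥0∞) := by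
        rw [ENNReal.inv_le_iff_inv_le]
        calc (ε : ℝ≥0∞)⁻¹ ≤ (N : ℝ≥0∞) := hN.le
          _ ≤ (m : ℝ≥0∞) + 1 := by
            exact_mod_cast le_trans (Nat.cast_le.2 hm) (le_add_of_nonneg_right zero_le_one)
      calc F (x m) ≤ L + ((m : ℝ≥0∞) + 1)⁻¹ := (hx1 m).le
        _ ≤ L + ε := add_le_add_right h1 L
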